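/- Let Λ: {F_1,…,F_m} → ℤ₂^r be a vector-colouring with Λ_{j_1},…,Λ_{j_r} a basis, and suppose every Λ_k written in this basis has some parity of the number of nonzero coordinates. Define Λ̂: {F_1,…,F_m} → ℤ₂^{r+1} by Λ̂_k = Λ_k if Λ_k has an odd number of nonzero coordinates, and Λ̂_k = Λ_k + (e_{r+1} + Λ_{i_0}) if Λ_k has an even number of nonzero coordinates, where Λ_{i_0} is a fixed vector with an even number of nonzero coordinates. Then Λ̂ satisfies the vector-colouring condition (*): for any vertex F_{i_1}∩⋯∩F_{i_n}, the vectors Λ̂_{i_1},…,Λ̂_{i_n} are linearly independent. -/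

import Mathlib

/-- Let `Λ : {F_1,…,F_m} → ℤ₂^r` satisfy the vector-colouring condition (*)
(at each vertex of the simple `n`-polytope the vectors of the `n` facets containing it are
linearly independent), with `Λ_{j 1}, …, Λ_{j r}` a basis `B`.  Embed `ℤ₂^r ⊂ ℤ₂^{r+1}`
(last coordinate zero, via `Fin.snoc · 0`), let `e_{r+1} = Pi.single (Fin.last r) 1`, and
fix `i₀` with an even number of nonzero coordinates in the basis `B` (coordinate sum `0`
in `ℤ₂`).  Define `Λ̂ k = Λ k` if `Λ k` has an odd number of nonzero coordinates
(coordinate sum `1`) and `Λ̂ k = Λ k + (e_{r+1} + Λ i₀)` otherwise.  Then `Λ̂` again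
satisfies condition (*): for each vertex the vectors `Λ̂` of its facets are linearly
independent in `ℤ₂^{r+1}`. -/
theorem stmt_4 (m n r : ℕ) (hr : 0 < r)
    (IsVertex : Finset (Fin m) → Prop)
    (Λ : Fin m → (Fin r → ZMod 2))
    (hstar : ∀ S : Finset (Fin m), IsVertex S → S.card = n →
      LinearIndependent (ZMod 2) (fun i : S => Λ i))
    (j : Fin r → Fin m)
    (B : Module.Basis (Fin r) (ZMod 2) (Fin r → ZMod 2)) (hB : ∀ s, B s = Λ (j s))
    (i₀ : Fin m) (hi₀ : (∑ s, B.repr (Λ i₀) s) = 0)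
    (Λhat : Fin m → (Fin (r + 1) → ZMod 2))
    (hΛhat : ∀ k, Λhat k =
      if (∑ s, B.repr (Λ k) s) = 1 then Fin.snoc (Λ k) 0
      else Fin.snoc (Λ k) 0 + (Pi.single (Fin.last r) 1 + Fin.snoc (Λ i₀) 0)) :
    ∀ S : Finset (Fin m), IsVertex S → S.card = n →
      LinearIndependent (ZMod 2) (fun i : S => Λhat i) := by
  classical
  let T : (Fin (r + 1) → ZMod 2) →ₗ[ZMod 2] (Fin r → ZMod 2) :=
    { toFun := fun v => (fun s => v (Fin.castSucc s)) + v (Fin.last r) • Λ i₀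
      map_add' := by
        intro a b
        funext s
        simp [add_smul]
        abel
      map_smul' := by
        intro c a
        funext s
        simp [mul_smul, smul_add]
        ring }
  have hT : ∀ k, T (Λhat k) = Λ k := by
    intro k
    rw [hΛhat k]
    by_cases h : (∑ s, B.repr (Λ k) s) = 1
    · simp only [if_pos h]
      funext s
      simp [T, Fin.snoc, Fin.castSucc_lt_last]
    · simp only [if_neg h]
      funext s
      have hne : Fin.castSucc s ≠ Fin.last r := (Fin.castSucc_lt_last s).ne
      simp [T, Fin.snoc, Fin.castSucc_lt_last, Pi.single_eq_of_ne hne,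
        Pi.single_eq_same]
      have : (Λ i₀ s : ZMod 2) + Λ i₀ s = 0 := CharTwo.add_self_eq_zero _
      linear_combination this
  intro S hS hcard
  have h1 := hstar S hS hcard
  have h2 : (fun i : S => Λ i.1) = T ∘ (fun i : S => Λhat i.1) := by
    funext i
    simp [hT]
  rw [h2] at h1
  exact LinearIndependent.of_comp T h1
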